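/- Let g be a bijection of ℤ with w(g) := sup_j |g(j)-j| finite. Then there is a constant C'' depending only on w(g) such that for all positive integers n and all j ∈ ℤ, |a_{n,g(j)}/a_{n,j} - 1| ≤ C''·e^{-|j|/n}. -/

import Mathlib

/-- `a n j = exp (-n e^{-|j|/n})`. -/
noncomputable def a (n : ℕ) (j : ℤ) : ℝ :=
  Real.exp (-(n : ℝ) * Real.exp (-|(j : ℝ)| / n))

lemma abs_exp_sub_one_le' (x : ℝ) : |Real.exp x - 1| ≤ |x| * Real.exp |x| := by
  rcases le_or_gt 0 x with hx | hx
  · rw [abs_of_nonneg hx,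
      abs_of_nonneg (by linarith [Real.one_le_exp hx] : (0:ℝ) ≤ Real.exp x - 1)]
    have h := Real.add_one_le_exp (-x)
    have hp := Real.exp_pos x
    have hmul : Real.exp (-x) * Real.exp x = 1 := by
      rw [← Real.exp_add]; simp
    nlinarith
  · have h1 : Real.exp x < 1 := Real.exp_lt_one_iff.mpr hx
    rw [abs_of_neg hx, abs_of_nonpos (by linarith : Real.exp x - 1 ≤ 0)]
    have h := Real.add_one_le_exp x
    have h2 : (1:ℝ) ≤ Real.exp (-x) := Real.one_le_exp (by linarith)
    nlinarith

theorem ratio_a_sub_one_le (w : ℝ) :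
    ∃ C'' : ℝ, ∀ g : Equiv.Perm ℤ, (∀ j : ℤ, |(g j : ℝ) - j| ≤ w) →
      ∀ n : ℕ, 0 < n → ∀ j : ℤ,
        |a n (g j) / a n j - 1| ≤ C'' * Real.exp (-|(j : ℝ)| / n) := by
  set W := max w 0 with hWdef
  have hW0 : 0 ≤ W := le_max_right _ _
  refine ⟨W * Real.exp W * Real.exp (W * Real.exp W), ?_⟩
  intro g hg n hn j
  have hnR : (0:ℝ) < n := by exact_mod_cast hn
  have hn1 : (1:ℝ) ≤ n := by exact_mod_cast hn
  set t := |(j:ℝ)| / n with ht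
  set s := |((g j : ℤ) : ℝ)| / n with hs
  have ht0 : 0 ≤ t := div_nonneg (abs_nonneg _) hnR.le
  have hWn : W / n ≤ W := by
    rw [div_le_iff₀ hnR]
    nlinarith
  have hts : |t - s| ≤ W / n := by
    have hnum : |(|(j:ℝ)|) - (|((g j : ℤ) : ℝ)|)| ≤ W := by
      refine le_trans (abs_abs_sub_abs_le_abs_sub _ _) ?_
      rw [abs_sub_comm]
      exact (hg j).trans (le_max_left _ _)
    rw [ht, hs, div_sub_div_same, abs_div, abs_of_pos hnR]
    gcongr
  set x := (n:ℝ) * (Real.exp (-t) - Real.exp (-s)) with hxdef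
  have e1 : -|(j:ℝ)| / n = -t := by rw [ht]; ring
  have e2 : -|((g j : ℤ) : ℝ)| / n = -s := by rw [hs]; ring
  have hexp : a n (g j) / a n j = Real.exp x := by
    rw [a, a, e1, e2, ← Real.exp_sub, hxdef]
    congr 1
    ring
  have hfac : Real.exp (-t) - Real.exp (-s) =
      Real.exp (-t) * (1 - Real.exp (t - s)) := by
    rw [mul_one_sub, ← Real.exp_add]
    have : -t + (t - s) = -s := by ring
    rw [this]
  have hxabs : |x| = (n:ℝ) * Real.exp (-t) * |Real.exp (t - s) - 1| := by
    rw [hxdef, hfac, abs_mul, abs_mul, abs_of_pos hnR, abs_of_pos (Real.exp_pos _),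
      abs_sub_comm, mul_assoc]
  have hxle : |x| ≤ W * Real.exp W * Real.exp (-t) := by
    calc |x| = (n:ℝ) * Real.exp (-t) * |Real.exp (t - s) - 1| := hxabs
      _ ≤ (n:ℝ) * Real.exp (-t) * (|t - s| * Real.exp |t - s|) := by
          have := abs_exp_sub_one_le' (t - s)
          have hpos : 0 ≤ (n:ℝ) * Real.exp (-t) :=
            mul_nonneg hnR.le (Real.exp_pos _).le
          exact mul_le_mul_of_nonneg_left this hpos
      _ ≤ (n:ℝ) * Real.exp (-t) * ((W / n) * Real.exp W) := by
          have h1 : |t - s| ≤ W := hts.trans hWn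
          gcongr
      _ = W * Real.exp W * Real.exp (-t) := by
          field_simp
  have hxle' : |x| ≤ W * Real.exp W := by
    have h1 : Real.exp (-t) ≤ 1 := Real.exp_le_one_iff.mpr (by linarith)
    exact hxle.trans (mul_le_of_le_one_right (mul_nonneg hW0 (Real.exp_pos W).le) h1)
  rw [hexp, e1]
  calc |Real.exp x - 1| ≤ |x| * Real.exp |x| := abs_exp_sub_one_le' x
    _ ≤ (W * Real.exp W * Real.exp (-t)) * Real.exp (W * Real.exp W) := by
        apply mul_le_mul hxle (Real.exp_le_exp.mpr hxle') (Real.exp_pos _).le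
        positivity
    _ = W * Real.exp W * Real.exp (W * Real.exp W) * Real.exp (-t) := by ring
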